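/- Conversely, suppose every path (in the graph on ℤ with edges {n, n-k} for θ_k ≠ 0) joining any two given vertices has the same sign, where the sign of a path is the product of sign(θ_{|n_i - n_{i+1}|}) over its edges. Then there exists a configuration s ∈ {-1,1}^ℤ coherent with θ. -/

import Mathlib

/-- Extension of `θ : ℕ+ → ℝ` to `ℕ`, vanishing at `0`. -/
noncomputable def thetaExt (θ : ℕ+ → ℝ) (m : ℕ) : ℝ :=
  if h : 0 < m then θ ⟨m, h⟩ else 0

def Reach (θ : ℕ+ → ℝ) (a b : ℤ) : Prop :=
  ∃ l : ℕ, ∃ n : ℕ → ℤ, n 0 = a ∧ n l = b ∧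
    ∀ i < l, thetaExt θ ((n i - n (i + 1)).natAbs) ≠ 0

lemma reach_refl (θ : ℕ+ → ℝ) (a : ℤ) : Reach θ a a :=
  ⟨0, fun _ => a, rfl, rfl, fun i hi => absurd hi (Nat.not_lt_zero i)⟩

lemma reach_symm {θ : ℕ+ → ℝ} {a b : ℤ} (h : Reach θ a b) : Reach θ b a := by
  obtain ⟨l, n, h0, hl, he⟩ := h
  refine ⟨l, fun i => n (l - i), by simp [hl], by simp [h0], ?_⟩
  intro i hi
  have h1 : l - (i + 1) + 1 = l - i := by omega
  have key : ((n (l - i) - n (l - (i + 1))).natAbs)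
      = ((n (l - (i + 1)) - n (l - (i + 1) + 1)).natAbs) := by
    rw [h1]; omega
  simpa [key] using he (l - (i + 1)) (by omega)

lemma reach_trans {θ : ℕ+ → ℝ} {a b c : ℤ} (h1 : Reach θ a b) (h2 : Reach θ b c) :
    Reach θ a c := by
  obtain ⟨l1, p, p0, pl, pe⟩ := h1
  obtain ⟨l2, q, q0, ql, qe⟩ := h2
  refine ⟨l1 + l2, fun i => if i < l1 then p i else q (i - l1), ?_, ?_, ?_⟩
  · by_cases h : 0 < l1
    · simp [h, p0]
    · have hl1 : l1 = 0 := by omega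
      subst hl1
      simp [q0, ← pl, p0]
  · have h : ¬ l1 + l2 < l1 := by omega
    simp [h, ql]
  · intro i hi
    by_cases h : i + 1 < l1
    · have h' : i < l1 := by omega
      simpa [h, h'] using pe i (by omega)
    · by_cases h' : i < l1
      · have hi1 : i + 1 = l1 := by omega
        have hq : q (i + 1 - l1) = p (i + 1) := by
          rw [hi1]; simp [q0, ← pl, hi1]
        have hq0 : q 0 = p (i + 1) := by rw [q0, ← pl, hi1]
        simpa [h, h', hq, hq0] using pe i (by omega)
      · have h2' : ¬ i + 1 < l1 := by omega
        have he : i + 1 - l1 = (i - l1) + 1 := by omega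
        simpa [h', h2', he] using qe (i - l1) (by omega)

noncomputable def pathProd (θ : ℕ+ → ℝ) (l : ℕ) (n : ℕ → ℤ) : ℝ :=
  ∏ i ∈ Finset.range l, Real.sign (thetaExt θ ((n i - n (i + 1)).natAbs))

noncomputable def reachSign {θ : ℕ+ → ℝ} {a b : ℤ} (h : Reach θ a b) : ℝ :=
  pathProd θ h.choose h.choose_spec.choose

lemma prod_sign_pm (l : ℕ) (f : ℕ → ℝ) (hf : ∀ i < l, f i ≠ 0) :
    (∏ i ∈ Finset.range l, Real.sign (f i)) = 1 ∨
    (∏ i ∈ Finset.range l, Real.sign (f i)) = -1 := by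
  induction l with
  | zero => left; simp
  | succ l ih =>
    rw [Finset.prod_range_succ]
    have h1 := ih (fun i hi => hf i (by omega))
    have h2 : Real.sign (f l) = 1 ∨ Real.sign (f l) = -1 := by
      rcases lt_trichotomy (f l) 0 with h | h | h
      · right; exact Real.sign_of_neg h
      · exact absurd h (hf l (by omega))
      · left; exact Real.sign_of_pos h
    rcases h1 with h1 | h1 <;> rcases h2 with h2 | h2 <;> simp [h1, h2]

lemma natAbs_sub_comm' (a b : ℤ) : (a - b).natAbs = (b - a).natAbs := by omega

lemma thetaExt_pnat (θ : ℕ+ → ℝ) (k : ℕ+) : thetaExt θ (k : ℕ) = θ k := by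
  simp only [thetaExt, dif_pos k.pos]
  congr 1


/-- If every pair of paths with common endpoints in the graph of `θ` has the same sign,
then a configuration coherent with `θ` exists. -/
theorem coherent_of_path_signs (θ : ℕ+ → ℝ)
    (hpaths : ∀ (l₁ l₂ : ℕ) (n₁ n₂ : ℕ → ℤ),
      (∀ i < l₁, thetaExt θ ((n₁ i - n₁ (i + 1)).natAbs) ≠ 0) →
      (∀ i < l₂, thetaExt θ ((n₂ i - n₂ (i + 1)).natAbs) ≠ 0) →
      n₁ 0 = n₂ 0 → n₁ l₁ = n₂ l₂ →
      ∏ i ∈ Finset.range l₁, Real.sign (thetaExt θ ((n₁ i - n₁ (i + 1)).natAbs))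
        = ∏ i ∈ Finset.range l₂, Real.sign (thetaExt θ ((n₂ i - n₂ (i + 1)).natAbs))) :
    ∃ s : ℤ → ℝ, (∀ n, s n = 1 ∨ s n = -1) ∧
      ∀ (n : ℤ) (k : ℕ+), θ k ≠ 0 → s n * s (n - (k : ℤ)) * θ k > 0 := by
  classical
  letI S : Setoid ℤ := ⟨Reach θ, ⟨fun a => reach_refl θ a, reach_symm, reach_trans⟩⟩
  have hrep : ∀ n : ℤ, Reach θ ((Quotient.mk S n).out) n :=
    fun n => by have := Quotient.exact (Quotient.out_eq (Quotient.mk S n)); exact this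
  -- the key well-definedness fact
  have key : ∀ (a b : ℤ) (h : Reach θ a b) (l : ℕ) (m : ℕ → ℤ), m 0 = a → m l = b →
      (∀ i < l, thetaExt θ ((m i - m (i + 1)).natAbs) ≠ 0) →
      reachSign h = pathProd θ l m := by
    intro a b h l m hm0 hml hme
    obtain ⟨hc0, hcl, hce⟩ := h.choose_spec.choose_spec
    exact hpaths h.choose l h.choose_spec.choose m hce hme (by rw [hc0, hm0])
      (by rw [hcl, hml])
  have hpm : ∀ (a b : ℤ) (h : Reach θ a b), reachSign h = 1 ∨ reachSign h = -1 := by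
    intro a b h
    obtain ⟨hc0, hcl, hce⟩ := h.choose_spec.choose_spec
    exact prod_sign_pm h.choose _ hce
  refine ⟨fun n => reachSign (hrep n), fun n => hpm _ _ _, ?_⟩
  intro n k hk
  simp only
  -- the edge from n to n - k
  have hkk : ((n - (n - (k : ℤ))).natAbs) = (k : ℕ) := by
    have : n - (n - (k : ℤ)) = (k : ℤ) := by ring
    rw [this]; exact Int.natAbs_natCast _
  have hedge : Reach θ n (n - (k : ℤ)) := by
    refine ⟨1, fun i => if i = 0 then n else n - (k : ℤ), rfl, rfl, ?_⟩
    intro i hi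
    have hi0 : i = 0 := by omega
    subst hi0
    simpa [hkk, thetaExt_pnat] using hk
  have hrepeq : (Quotient.mk S n).out = (Quotient.mk S (n - (k : ℤ))).out :=
    congrArg Quotient.out (Quotient.sound hedge)
  set h2 := hrep (n - (k : ℤ)) with hh2
  obtain ⟨hp0, hpl, hpe⟩ := h2.choose_spec.choose_spec
  set l := h2.choose with hl
  set p := h2.choose_spec.choose with hp
  -- extended path
  have hstep : reachSign (hrep n) = reachSign h2 * Real.sign (θ k) := by
    have hm0 : (fun i => if i ≤ l then p i else n) 0 = (Quotient.mk S n).out := by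
      simp [hp0, hrepeq]
    have hml : (fun i => if i ≤ l then p i else n) (l + 1) = n := by
      simp
    have hme : ∀ i < l + 1, thetaExt θ
        (((fun i => if i ≤ l then p i else n) i
          - (fun i => if i ≤ l then p i else n) (i + 1)).natAbs) ≠ 0 := by
      intro i hi
      by_cases h : i < l
      · have h1 : i ≤ l := by omega
        have h2 : i + 1 ≤ l := by omega
        simpa [h1, h2] using hpe i h
      · have hi0 : i = l := by omega
        subst hi0
        have h1 : l ≤ l := le_refl l
        have h2 : ¬ l + 1 ≤ l := by omega
        simp only [h1, if_pos, h2, if_neg, if_true, if_false]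
        rw [hpl, natAbs_sub_comm' _ n, hkk, thetaExt_pnat]
        exact hk
    have hnew := key _ n (hrep n) (l + 1) (fun i => if i ≤ l then p i else n) hm0 hml hme
    rw [hnew, pathProd, Finset.prod_range_succ]
    congr 1
    · show _ = reachSign h2
      rw [show reachSign h2 = pathProd θ l p from rfl, pathProd]
      refine Finset.prod_congr rfl fun i hi => ?_
      simp only [Finset.mem_range] at hi
      have h1 : i ≤ l := by omega
      have h2 : i + 1 ≤ l := by omega
      simp [h1, h2]
    · have h1 : l ≤ l := le_refl l
      have h2 : ¬ l + 1 ≤ l := by omega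
      simp only [h1, if_pos, h2, if_neg, if_true, if_false]
      rw [hpl, natAbs_sub_comm' _ n, hkk, thetaExt_pnat]
  rw [hstep]
  have hsq : reachSign h2 = 1 ∨ reachSign h2 = -1 := hpm _ _ _
  have hsgn : Real.sign (θ k) * θ k > 0 := by
    rcases lt_trichotomy (θ k) 0 with h | h | h
    · rw [Real.sign_of_neg h]; nlinarith
    · exact absurd h hk
    · rw [Real.sign_of_pos h]; nlinarith
  rcases hsq with h | h <;> rw [h] <;> nlinarith
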